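/- (Restricted Johnson bound.) Let q ≥ 2, and let n, d, w be positive integers with q·w² − 2(q−1)·n·w + n·d·(q−1) > 0. Then every code of length n over an alphabet of size q, all of whose codewords have weight exactly w and whose minimum distance is at least d, has size at most ⌊ n·d·(q−1) / (q·w² − 2(q−1)·n·w + n·d·(q−1)) ⌋. -/

import Mathlib

set_option maxHeartbeats 1600000 in
/-- **Restricted Johnson bound.** Let `q ≥ 2` and let `n, d, w` be positive
integers with `q·w² − 2(q−1)·n·w + n·d·(q−1) > 0` (stated additively to avoid truncated
subtraction).  Then every nonempty code of length `n` over an alphabet of size `q`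
(with designated zero symbol `z`), all of whose codewords have weight exactly `w` and
whose minimum distance is at least `d`, has size at most
`⌊ n·d·(q−1) / (q·w² − 2(q−1)·n·w + n·d·(q−1)) ⌋`. -/
theorem restricted_johnson_bound
    (q n d w : ℕ) (hq : 2 ≤ q) (hn : 0 < n) (hd : 0 < d) (hw : 0 < w)
    (hpos : 2 * (q - 1) * n * w < q * w ^ 2 + n * d * (q - 1))
    (A : Type) [Fintype A] [DecidableEq A] (z : A) (hA : Fintype.card A = q)
    (C : Finset (Fin n → A)) (hCne : C.Nonempty)
    (hwt : ∀ x ∈ C, (Finset.univ.filter (fun i : Fin n => x i ≠ z)).card = w)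
    (hdist : ∀ x ∈ C, ∀ y ∈ C, x ≠ y → d ≤ hammingDist x y) :
    C.card ≤ n * d * (q - 1) / (q * w ^ 2 + n * d * (q - 1) - 2 * (q - 1) * n * w) := by
  classical
  set M := C.card with hM
  have hMpos : 0 < M := hCne.card_pos
  set N : Fin n → A → ℕ := fun i a => (C.filter (fun x => x i = a)).card with hNdef
  set S : Fin n → ℕ := fun i => (C.filter (fun x => x i ≠ z)).card with hSdef
  -- F2 : N i z + S i = M
  have F2 : ∀ i, N i z + S i = M := by
    intro i
    simpa using Finset.card_filter_add_card_filter_not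
      (s := C) (p := fun x : Fin n → A => x i = z)
  -- F1 : partition of C by value at coordinate i
  have F1 : ∀ i, ∑ a : A, N i a = M := fun i =>
    (Finset.card_eq_sum_card_fiberwise (fun x _ => Finset.mem_univ (x i))).symm
  -- F2' : S i as sum over nonzero symbols
  have F2' : ∀ i, S i = ∑ a ∈ Finset.univ.erase z, N i a := by
    intro i
    have h := Finset.card_eq_sum_card_fiberwise
      (s := C.filter (fun x => x i ≠ z)) (t := Finset.univ.erase z) (f := fun x => x i)
      (fun x hx => by
        simp only [Finset.mem_coe, Finset.mem_filter] at hx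
        exact Finset.mem_erase.2 ⟨hx.2, Finset.mem_univ _⟩)
    rw [hSdef]
    simp only [h]
    refine Finset.sum_congr rfl fun a ha => ?_
    have haz : a ≠ z := (Finset.mem_erase.1 ha).1
    congr 1
    rw [Finset.filter_filter]
    refine Finset.filter_congr fun x _ => ?_
    constructor
    · rintro ⟨_, h2⟩; exact h2
    · intro h2; exact ⟨by rw [h2]; exact haz, h2⟩
  -- F3 : total weight
  have F3 : ∑ i, S i = M * w := by
    have : ∑ i, S i = ∑ i : Fin n, ∑ x ∈ C, (if x i ≠ z then 1 else 0) := by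
      refine Finset.sum_congr rfl fun i _ => ?_
      simp only [hSdef, Finset.card_filter]
    rw [this, Finset.sum_comm]
    have : ∀ x ∈ C, (∑ i : Fin n, (if x i ≠ z then 1 else 0)) = w := by
      intro x hx
      rw [← Finset.card_filter, hwt x hx]
    rw [Finset.sum_congr rfl this, Finset.sum_const, smul_eq_mul]
  -- F4 : agreement count per coordinate
  have F4 : ∀ i : Fin n,
      (∑ x ∈ C, ∑ y ∈ C, if x i = y i then 1 else 0) = ∑ a : A, N i a * N i a := by
    intro i
    have step1 : ∀ x ∈ C, (∑ y ∈ C, if x i = y i then 1 else 0) = N i (x i) := by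
      intro x _
      simp only [hNdef, Finset.card_filter]
      exact Finset.sum_congr rfl fun y _ => by simp [eq_comm]
    rw [Finset.sum_congr rfl step1]
    rw [← Finset.sum_fiberwise_of_maps_to (g := fun x : Fin n → A => x i)
      (fun x _ => Finset.mem_univ (x i)) (fun x => N i (x i))]
    refine Finset.sum_congr rfl fun a _ => ?_
    have : ∀ x ∈ C.filter (fun x => x i = a), N i (x i) = N i a := by
      intro x hx
      rw [(Finset.mem_filter.1 hx).2]
    rw [Finset.sum_congr rfl this, Finset.sum_const, smul_eq_mul]
  -- F5 : distances + agreements = n * M^2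
  have F5 : (∑ x ∈ C, ∑ y ∈ C, hammingDist x y) + (∑ i, ∑ a : A, N i a * N i a)
      = n * (M * M) := by
    have hdistsum : ∀ x y : Fin n → A,
        hammingDist x y = ∑ i : Fin n, (if x i ≠ y i then 1 else 0) := by
      intro x y
      show (Finset.univ.filter fun i => x i ≠ y i).card = _
      rw [Finset.card_filter]
    have h1 : (∑ x ∈ C, ∑ y ∈ C, hammingDist x y)
        = ∑ i : Fin n, ∑ x ∈ C, ∑ y ∈ C, (if x i ≠ y i then 1 else 0) :=
      calc (∑ x ∈ C, ∑ y ∈ C, hammingDist x y)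
          = ∑ x ∈ C, ∑ y ∈ C, ∑ i : Fin n, (if x i ≠ y i then 1 else 0) :=
            Finset.sum_congr rfl fun x _ => Finset.sum_congr rfl fun y _ => hdistsum x y
        _ = ∑ x ∈ C, ∑ i : Fin n, ∑ y ∈ C, (if x i ≠ y i then 1 else 0) :=
            Finset.sum_congr rfl fun x _ => Finset.sum_comm
        _ = ∑ i : Fin n, ∑ x ∈ C, ∑ y ∈ C, (if x i ≠ y i then 1 else 0) :=
            Finset.sum_comm
    rw [h1]
    have hcomb : (∑ i : Fin n, ∑ x ∈ C, ∑ y ∈ C, (if x i ≠ y i then 1 else 0))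
        + (∑ i : Fin n, ∑ a : A, N i a * N i a)
        = ∑ i : Fin n, ((∑ x ∈ C, ∑ y ∈ C, (if x i ≠ y i then 1 else 0))
            + ∑ a : A, N i a * N i a) :=
      Finset.sum_add_distrib.symm
    rw [hcomb]
    have : ∀ i : Fin n, ((∑ x ∈ C, ∑ y ∈ C, (if x i ≠ y i then 1 else 0))
        + ∑ a : A, N i a * N i a) = M * M := by
      intro i
      rw [← F4 i, ← Finset.sum_add_distrib]
      have : ∀ x ∈ C, ((∑ y ∈ C, if x i ≠ y i then 1 else 0)
          + ∑ y ∈ C, if x i = y i then 1 else 0) = M := by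
        intro x _
        rw [← Finset.sum_add_distrib]
        have : ∀ y ∈ C, ((if x i ≠ y i then 1 else 0) + if x i = y i then 1 else 0) = 1 := by
          intro y _
          by_cases h : x i = y i <;> simp [h]
        rw [Finset.sum_congr rfl this, Finset.sum_const, smul_eq_mul, mul_one]
      rw [Finset.sum_congr rfl this, Finset.sum_const, smul_eq_mul]
    rw [Finset.sum_congr rfl (fun i _ => this i), Finset.sum_const, Finset.card_univ,
      Fintype.card_fin, smul_eq_mul]
  -- F6 : distance lower bound
  have F6 : M * ((M - 1) * d) ≤ ∑ x ∈ C, ∑ y ∈ C, hammingDist x y := by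
    have : ∀ x ∈ C, (M - 1) * d ≤ ∑ y ∈ C, hammingDist x y := by
      intro x hx
      have h1 : ∑ y ∈ C, hammingDist x y
          = hammingDist x x + ∑ y ∈ C.erase x, hammingDist x y :=
        (Finset.add_sum_erase C _ hx).symm
      rw [h1, hammingDist_self, zero_add]
      calc (M - 1) * d = (C.erase x).card * d := by rw [Finset.card_erase_of_mem hx]
        _ = (C.erase x).card • d := (smul_eq_mul _ _).symm
        _ ≤ ∑ y ∈ C.erase x, hammingDist x y := Finset.card_nsmul_le_sum _ _ _
            (fun y hy => hdist x hx y (Finset.mem_erase.1 hy).2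
              (fun
                h => (Finset.mem_erase.1 hy).1 h.symm))
    calc M * ((M - 1) * d) = ∑ _x ∈ C, (M - 1) * d := by
          rw [Finset.sum_const, smul_eq_mul]
      _ ≤ _ := Finset.sum_le_sum this
  -- Now move to ℚ
  have hcarderase : (Finset.univ.erase z).card = q - 1 := by
    rw [Finset.card_erase_of_mem (Finset.mem_univ z), Finset.card_univ, hA]
  -- Cauchy–Schwarz per coordinate
  have CS1 : ∀ i : Fin n, ((S i : ℚ)) ^ 2 ≤ ((q : ℚ) - 1) * ∑ a ∈ Finset.univ.erase z,
      (N i a : ℚ) ^ 2 := by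
    intro i
    have h := sq_sum_le_card_mul_sum_sq (s := Finset.univ.erase z)
      (f := fun a => (N i a : ℚ))
    have hcast : ((S i : ℚ)) = ∑ a ∈ Finset.univ.erase z, (N i a : ℚ) := by
      rw [F2' i]; push_cast; ring
    rw [hcast]
    have hq1 : ((Finset.univ.erase z).card : ℚ) = (q : ℚ) - 1 := by
      rw [hcarderase]
      have : (1 : ℕ) ≤ q := by omega
      push_cast [Nat.cast_sub this]
      ring
    rw [← hq1]
    exact h
  -- define the sums in ℚ
  set TZ : ℚ := ∑ i : Fin n, (N i z : ℚ) ^ 2 with hTZ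
  set TS : ℚ := ∑ i : Fin n, (S i : ℚ) ^ 2 with hTS
  set U : ℚ := ∑ i : Fin n, ∑ a ∈ Finset.univ.erase z, (N i a : ℚ) ^ 2 with hU
  have CS1' : TS ≤ ((q : ℚ) - 1) * U := by
    rw [hTS, hU, Finset.mul_sum]
    exact Finset.sum_le_sum fun i _ => CS1 i
  -- sum of N i z
  have EZ : (∑ i : Fin n, (N i z : ℚ)) = (M : ℚ) * n - (M : ℚ) * w := by
    have : ∑ i : Fin n, (N i z + S i) = n * M := by
      rw [Finset.sum_congr rfl fun i _ => F2 i, Finset.sum_const, Finset.card_univ,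
        Fintype.card_fin, smul_eq_mul]
    have h2 : (∑ i : Fin n, N i z) + M * w = n * M := by
      rw [← F3, ← Finset.sum_add_distrib]; exact this
    have := congrArg (fun x : ℕ => (x : ℚ)) h2
    push_cast at this
    linarith
  have ES : (∑ i : Fin n, (S i : ℚ)) = (M : ℚ) * w := by
    have := congrArg (fun x : ℕ => (x : ℚ)) F3
    push_cast at this
    linarith
  -- Cauchy–Schwarz across coordinates
  have CS2 : ((M : ℚ) * n - (M : ℚ) * w) ^ 2 ≤ (n : ℚ) * TZ := by
    have h := sq_sum_le_card_mul_sum_sq (s := (Finset.univ : Finset (Fin n)))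
      (f := fun i => (N i z : ℚ))
    rw [EZ] at h
    simpa [hTZ] using h
  have CS3 : ((M : ℚ) * w) ^ 2 ≤ (n : ℚ) * TS := by
    have h := sq_sum_le_card_mul_sum_sq (s := (Finset.univ : Finset (Fin n)))
      (f := fun i => (S i : ℚ))
    rw [ES] at h
    simpa [hTS] using h
  -- T decomposition
  set T : ℕ := ∑ i, ∑ a : A, N i a * N i a with hT
  have Tsplit : (T : ℚ) = TZ + U := by
    rw [hT, hTZ, hU]
    push_cast
    rw [← Finset.sum_add_distrib]
    refine Finset.sum_congr rfl fun i _ => ?_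
    have h := Finset.add_sum_erase (Finset.univ : Finset A)
      (fun a => (N i a : ℚ) ^ 2) (Finset.mem_univ z)
    simp only [pow_two] at h ⊢
    exact h.symm
  -- main counting inequality in ℚ
  have main : (M : ℚ) * (((M : ℚ) - 1) * d) + (T : ℚ) ≤ (n : ℚ) * ((M : ℚ) * M) := by
    have h := F5
    have h6 := F6
    have hcast := congrArg (fun x : ℕ => (x : ℚ)) h
    push_cast at hcast
    have h6' : ((M * ((M - 1) * d) : ℕ) : ℚ)
        ≤ ((∑ x ∈ C, ∑ y ∈ C, hammingDist x y : ℕ) : ℚ) := Nat.cast_le.2 h6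
    have hm1 : ((M - 1 : ℕ) : ℚ) = (M : ℚ) - 1 := by
      rw [Nat.cast_sub hMpos]; norm_num
    push_cast [hm1] at h6'
    linarith
  -- positivity facts
  have hq1pos : (0 : ℚ) < (q : ℚ) - 1 := by
    have : (2 : ℚ) ≤ (q : ℚ) := by exact_mod_cast hq
    linarith
  have hnpos : (0 : ℚ) < (n : ℚ) := by exact_mod_cast hn
  have hMQ : (1 : ℚ) ≤ (M : ℚ) := by exact_mod_cast hMpos
  -- combine
  have hTlb : ((q : ℚ) - 1) * (((M : ℚ) * n - (M : ℚ) * w) ^ 2)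
      + ((M : ℚ) * w) ^ 2 ≤ (n : ℚ) * (((q : ℚ) - 1) * (T : ℚ)) := by
    have h1 : (n : ℚ) * TS ≤ (n : ℚ) * (((q : ℚ) - 1) * U) := by
      apply mul_le_mul_of_nonneg_left CS1' (le_of_lt hnpos)
    have h2 := CS3
    have h3 : ((q : ℚ) - 1) * (((M : ℚ) * n - (M : ℚ) * w) ^ 2)
        ≤ ((q : ℚ) - 1) * ((n : ℚ) * TZ) :=
      mul_le_mul_of_nonneg_left CS2 (le_of_lt hq1pos)
    rw [Tsplit]
    nlinarith [h1, h2, h3]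
  -- the key polynomial inequality (times M)
  have keyM : ((M : ℚ) * ((q : ℚ) * w ^ 2 + (n : ℚ) * d * ((q : ℚ) - 1))) * (M : ℚ)
      ≤ ((n : ℚ) * d * ((q : ℚ) - 1) + (M : ℚ) * (2 * ((q : ℚ) - 1) * n * w)) * (M : ℚ) := by
    have hmain2 : (n : ℚ) * (((q : ℚ) - 1) * ((M : ℚ) * (((M : ℚ) - 1) * d) + (T : ℚ)))
        ≤ (n : ℚ) * (((q : ℚ) - 1) * ((n : ℚ) * ((M : ℚ) * M))) := by
      apply mul_le_mul_of_nonneg_left _ (le_of_lt hnpos)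
      exact mul_le_mul_of_nonneg_left main (le_of_lt hq1pos)
    nlinarith [hTlb, hmain2]
  have key : (M : ℚ) * ((q : ℚ) * w ^ 2 + (n : ℚ) * d * ((q : ℚ) - 1))
      ≤ (n : ℚ) * d * ((q : ℚ) - 1) + (M : ℚ) * (2 * ((q : ℚ) - 1) * n * w) := by
    have hMpos' : (0 : ℚ) < (M : ℚ) := by linarith
    exact le_of_mul_le_mul_right keyM hMpos'
  -- back to ℕ
  have hq1c : ((q - 1 : ℕ) : ℚ) = (q : ℚ) - 1 := by
    rw [Nat.cast_sub (by omega : 1 ≤ q)]; norm_num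
  have keyN : M * (q * w ^ 2 + n * d * (q - 1))
      ≤ n * d * (q - 1) + M * (2 * (q - 1) * n * w) := by
    have := key
    rw [show ((q:ℚ) - 1) = ((q - 1 : ℕ) : ℚ) from hq1c.symm] at this
    exact_mod_cast this
  have hDpos : 0 < q * w ^ 2 + n * d * (q - 1) - 2 * (q - 1) * n * w := by omega
  rw [Nat.le_div_iff_mul_le hDpos]
  rw [Nat.mul_sub]
  omega
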